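/- Suppose (W,S) is a Coxeter system, I, J ⊆ S, and d is an element of minimal length in the double coset ⟨I⟩w⟨J⟩. Then ⟨I⟩ ∩ d⟨J⟩d⁻¹ = ⟨K⟩ where K = I ∩ dJd⁻¹. -/

import Mathlib

namespace KilmoyerAux

open CoxeterSystem List

section TwoInvolutions

variable {G : Type*} [Group G] {a b : G} (ha : a * a = 1) (hb : b * b = 1)

include ha hb in
theorem invol_mul_inv : (a * b)⁻¹ = b * a := by
  rw [mul_inv_rev, inv_eq_of_mul_eq_one_right ha, inv_eq_of_mul_eq_one_right hb]

include ha hb in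
theorem invol_conj_pow (k : ℕ) : ((a * b) ^ k)⁻¹ * b = b * (a * b) ^ k := by
  have hbinv : b⁻¹ = b := inv_eq_of_mul_eq_one_right hb
  have h1 : b * (a * b) * b⁻¹ = (a * b)⁻¹ := by
    rw [invol_mul_inv ha hb, hbinv]
    calc b * (a * b) * b = b * a * (b * b) := by group
      _ = b * a := by rw [hb, mul_one]
  have key : b * (a * b) ^ k * b⁻¹ = ((a * b) ^ k)⁻¹ := by
    rw [← conj_pow, h1, inv_pow]
  rw [← key, hbinv]
  calc b * (a*b)^k * b * b = b * (a*b)^k * (b*b) := by group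
    _ = b * (a*b)^k := by rw [hb, mul_one]

include ha hb in
theorem invol_conj_eq_b_iff (k : ℕ) (t : G) :
    ((a * b) ^ k * t * ((a * b) ^ k)⁻¹ = b) ↔ (t = b * (a * b) ^ (2 * k)) := by
  set p := a * b with hp
  constructor
  · intro h
    have ht : t = (p ^ k)⁻¹ * b * p ^ k := by rw [← h]; group
    rw [ht, invol_conj_pow ha hb, mul_assoc, ← pow_add, two_mul]
  · intro h
    rw [h, two_mul, pow_add]
    calc p ^ k * (b * (p ^ k * p ^ k)) * (p ^ k)⁻¹
        = p ^ k * (b * p ^ k) := by group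
      _ = p ^ k * (((p ^ k)⁻¹) * b) := by rw [← invol_conj_pow ha hb]
      _ = b := by group

include ha hb in
theorem invol_conj_eq_a_iff (k : ℕ) (t : G) :
    (b * ((a * b) ^ k * t * ((a * b) ^ k)⁻¹) * b = a) ↔ (t = b * (a * b) ^ (2 * k + 1)) := by
  set p := a * b with hp
  have hbinv : b⁻¹ = b := inv_eq_of_mul_eq_one_right hb
  have step : (b * (p ^ k * t * (p ^ k)⁻¹) * b = a) ↔ (p ^ k * t * (p ^ k)⁻¹ = b * p) := by
    have bab : b * a * b = b * p := by rw [hp, mul_assoc]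
    constructor
    · intro h
      have expand : ∀ X : G, b * (b * X * b) * b = X := by
        intro X
        calc b * (b * X * b) * b = (b * b) * X * (b * b) := by group
          _ = X := by rw [hb]; simp
      have h2 : p ^ k * t * (p ^ k)⁻¹ = b * a * b := by
        rw [← expand (p ^ k * t * (p ^ k)⁻¹), h]
      rw [h2, bab]
    · intro h
      rw [h, ← bab]
      calc b * (b * a * b) * b = (b * b) * a * (b * b) := by group
        _ = a := by rw [hb]; simp
  rw [step]
  have hsplit : p ^ (2 * k + 1) = p ^ k * (p * p ^ k) := by
    rw [show 2 * k + 1 = k + (1 + k) by ring, pow_add, pow_add, pow_one]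
  constructor
  · intro h
    have ht : t = (p ^ k)⁻¹ * (b * p) * p ^ k := by rw [← h]; group
    rw [ht, hsplit]
    calc (p ^ k)⁻¹ * (b * p) * p ^ k = ((p ^ k)⁻¹ * b) * (p * p ^ k) := by group
      _ = (b * p ^ k) * (p * p ^ k) := by rw [invol_conj_pow ha hb]
      _ = b * (p ^ k * (p * p ^ k)) := by group
  · intro h
    have h3 : b * (p ^ k)⁻¹ = p ^ k * b := by
      have e2 : (p ^ k)⁻¹ * b = b * p ^ k := invol_conj_pow ha hb k
      calc b * (p ^ k)⁻¹ = p ^ k * ((p ^ k)⁻¹ * b) * (p ^ k)⁻¹ := by group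
        _ = p ^ k * (b * p ^ k) * (p ^ k)⁻¹ := by rw [e2]
        _ = p ^ k * b := by group
    rw [h, hsplit]
    calc p ^ k * (b * (p ^ k * (p * p ^ k))) * (p ^ k)⁻¹
        = (b * (p ^ k)⁻¹) * p ^ k * p * p ^ k * (p ^ k)⁻¹ := by rw [h3]; group
      _ = b * p := by group
  
include ha hb in
theorem invol_comp_formula (k : ℕ) (t : G) :
    a * (b * ((a*b)^k * t * ((a*b)^k)⁻¹) * b) * a
      = (a*b)^(k+1) * t * ((a*b)^(k+1))⁻¹ := by
  rw [pow_succ', mul_inv_rev, invol_mul_inv ha hb]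
  group

end TwoInvolutions

variable {B : Type*} {W : Type*} [Group W] {M : CoxeterMatrix B} (cs : CoxeterSystem M W)

local prefix:100 "s" => cs.simple
local prefix:100 "π" => cs.wordProd
local prefix:100 "ℓ" => cs.length

open scoped Classical in
/-- Tits' permutation: acts on `W × ZMod 2`. -/
noncomputable def sigmaFun (i : B) : W × ZMod 2 → W × ZMod 2 :=
  fun p => (s i * p.1 * s i, p.2 + if p.1 = s i then 1 else 0)

theorem conj_simple_eq_iff (i : B) (t u : W) : (s i * t * s i = u) ↔ (t = s i * u * s i) := by
  constructor
  · intro h; rw [← h]; calc t = (s i * s i) * t * (s i * s i) := by simp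
                         _ = s i * (s i * t * s i) * s i := by group
  · intro h; rw [h]; calc s i * (s i * u * s i) * s i
        = (s i * s i) * u * (s i * s i) := by group
      _ = u := by simp

theorem sigmaFun_involutive (i : B) : Function.Involutive (sigmaFun cs i) := by
  classical
  rintro ⟨t, ε⟩
  simp only [sigmaFun, Prod.mk.injEq]
  constructor
  · calc s i * (s i * t * s i) * s i = (s i * s i) * t * (s i * s i) := by group
      _ = t := by simp
  · have h : (s i * t * s i = s i) ↔ (t = s i) := by
      rw [conj_simple_eq_iff]; simp
    rcases eq_or_ne t (s i) with rfl | ht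
    · simp only [h, if_pos rfl]
      have : ∀ x : ZMod 2, x + 1 + 1 = x := by decide
      exact this ε
    · simp [h, ht]

/-- Tits' permutation as an element of the permutation group. -/
noncomputable def sigma (i : B) : Equiv.Perm (W × ZMod 2) := (sigmaFun_involutive cs i).toPerm

open scoped Classical in
theorem sigma_apply (i : B) (p : W × ZMod 2) :
    sigma cs i p = (s i * p.1 * s i, p.2 + if p.1 = s i then 1 else 0) := by
  simp [sigma, Function.Involutive.toPerm, sigmaFun]

open scoped Classical in
theorem sigma_pow_formula (i j : B) (k : ℕ) (t : W) (ε : ZMod 2) :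
    ((sigma cs i * sigma cs j) ^ k) (t, ε) =
      ((s i * s j) ^ k * t * ((s i * s j) ^ k)⁻¹,
        ε + ∑ l ∈ Finset.range (2 * k), if t = s j * (s i * s j) ^ l then 1 else 0) := by
  have ha := cs.simple_mul_simple_self i
  have hb := cs.simple_mul_simple_self j
  induction k with
  | zero => simp
  | succ k ih =>
    set p := s i * s j with hp
    rw [pow_succ', Equiv.Perm.mul_apply, Equiv.Perm.mul_apply, ih, sigma_apply, sigma_apply]
    simp only [Prod.mk.injEq]
    constructor
    · exact invol_comp_formula ha hb k t
    · show ε + _ + _ + _ = ε + _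
      rw [show 2 * (k + 1) = 2 * k + 1 + 1 by ring, Finset.sum_range_succ, Finset.sum_range_succ]
      have h1 : (p ^ k * t * (p ^ k)⁻¹ = s j) ↔ (t = s j * p ^ (2 * k)) :=
        invol_conj_eq_b_iff ha hb k t
      have h2 : (s j * (p ^ k * t * (p ^ k)⁻¹) * s j = s i) ↔ (t = s j * p ^ (2 * k + 1)) :=
        invol_conj_eq_a_iff ha hb k t
      rw [if_congr h1 rfl rfl, if_congr h2 rfl rfl]
      ring

theorem sigma_liftable : M.IsLiftable (sigma cs) := by
  classical
  intro i j
  have hp : (s i * s j) ^ M i j = 1 := cs.simple_mul_simple_pow i j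
  have hsum : ∀ t : W, (∑ l ∈ Finset.range (2 * M i j),
      if t = s j * (s i * s j) ^ l then (1 : ZMod 2) else 0) = 0 := by
    intro t
    rw [two_mul, Finset.sum_range_add]
    have h2 : ∀ l, ((if t = s j * (s i * s j) ^ (M i j + l) then (1 : ZMod 2) else 0))
        = if t = s j * (s i * s j) ^ l then (1 : ZMod 2) else 0 := by
      intro l
      congr 1
      rw [pow_add, hp, one_mul]
    rw [Finset.sum_congr rfl (fun l _ => h2 l)]
    exact CharTwo.add_self_eq_zero _
  apply Equiv.ext
  rintro ⟨t, ε⟩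
  rw [sigma_pow_formula, hp, hsum]
  simp

/-- The Tits permutation representation on `W × ZMod 2`. -/
noncomputable def phi : W →* Equiv.Perm (W × ZMod 2) :=
  cs.lift ⟨sigma cs, sigma_liftable cs⟩

@[simp] theorem phi_simple (i : B) : phi cs (s i) = sigma cs i :=
  cs.lift_apply_simple (sigma_liftable cs) i

theorem phi_apply (w : W) : ∀ (t : W) (ε : ZMod 2),
    phi cs w (t, ε) = (w * t * w⁻¹, ε + (phi cs w (t, 0)).2) := by
  classical
  induction w using cs.simple_induction_left with
  | one => intro t ε; simp
  | mul_simple_left w i ih =>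
    intro t ε
    have key : ∀ δ : ZMod 2, phi cs (s i * w) (t, δ) =
        (s i * (w * t * w⁻¹) * s i,
          δ + ((phi cs w (t, 0)).2 + if w * t * w⁻¹ = s i then 1 else 0)) := by
      intro δ
      rw [map_mul, Equiv.Perm.mul_apply, ih t δ, phi_simple, sigma_apply, add_assoc]
    rw [key ε, key 0]
    rw [Prod.mk.injEq]
    constructor
    · rw [mul_inv_rev, cs.inv_simple]
      group
    · show ε + _ = ε + (0 + _)
      rw [zero_add]

/-- The parity invariant. -/
noncomputable def nu (w t : W) : ZMod 2 := (phi cs w⁻¹ (t, 0)).2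

open scoped Classical in
theorem nu_eq_count (ω : List B) (t : W) :
    nu cs (π ω) t = ((cs.leftInvSeq ω).count t : ZMod 2) := by
  induction ω generalizing t with
  | nil => simp [nu, phi]
  | cons i ω ih =>
    have h1 : (π (i :: ω))⁻¹ = (π ω)⁻¹ * s i := by
      rw [cs.wordProd_cons, mul_inv_rev, cs.inv_simple]
    have h2 : nu cs (π (i :: ω)) t
        = (if t = s i then 1 else 0) + nu cs (π ω) (s i * t * s i) := by
      rw [nu, h1, map_mul, Equiv.Perm.mul_apply, phi_simple, sigma_apply]
      rw [phi_apply]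
      show _ = _ + (phi cs (π ω)⁻¹ (s i * t * s i, 0)).2
      rw [zero_add, add_comm]
    rw [h2, ih]
    have h3 : cs.leftInvSeq (i :: ω) = s i :: List.map (MulAut.conj (s i)) (cs.leftInvSeq ω) := rfl
    rw [h3, List.count_cons]
    have h4 : (List.map (⇑(MulAut.conj (s i))) (cs.leftInvSeq ω)).count t
        = (cs.leftInvSeq ω).count (s i * t * s i) := by
      have hinj : Function.Injective (⇑(MulAut.conj (s i))) := (MulAut.conj (s i)).injective
      have ht : t = MulAut.conj (s i) (s i * t * s i) := by
        simp only [MulAut.conj_apply, cs.inv_simple]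
        have : s i * (s i * t * s i) * s i = t := by
          calc s i * (s i * t * s i) * s i = (s i * s i) * t * (s i * s i) := by group
            _ = t := by simp
        exact this.symm
      rw [ht, List.count_map_of_injective _ _ hinj, ← ht]
    rw [h4]
    push_cast
    rw [add_comm]
    congr 1
    by_cases h : t = s i
    · rw [if_pos h, if_pos (by exact beq_iff_eq.mpr h.symm)]
    · rw [if_neg h, if_neg (by simp [beq_iff_eq]; exact fun hh => h hh.symm)]

theorem refl_phi_self {t : W} (ht : cs.IsReflection t) : (phi cs t (t, 0)).2 = 1 := by
  classical
  obtain ⟨u, i, rfl⟩ := ht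
  have hfix : u⁻¹ * (u * s i * u⁻¹) * u = s i := by group
  have hx : phi cs u⁻¹ (u * s i * u⁻¹, 0) = (s i, (phi cs u⁻¹ (u * s i * u⁻¹, 0)).2) := by
    rw [phi_apply]
    rw [inv_inv, zero_add, hfix]
  set x := (phi cs u⁻¹ (u * s i * u⁻¹, 0)).2 with hxdef
  set y := (phi cs u (s i, 0)).2 with hydef
  have hy : ∀ δ : ZMod 2, phi cs u (s i, δ) = (u * s i * u⁻¹, δ + y) := fun δ => phi_apply cs u (s i) δ
  have hxy : x + y = 0 := by
    have hh : phi cs u (phi cs u⁻¹ (u * s i * u⁻¹, 0)) = (u * s i * u⁻¹, 0) := by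
      rw [← Equiv.Perm.mul_apply, ← map_mul, mul_inv_cancel, map_one, Equiv.Perm.one_apply]
    rw [hx, hy x] at hh
    have := congrArg Prod.snd hh
    exact this
  have hcomp : phi cs (u * s i * u⁻¹) (u * s i * u⁻¹, 0) = (u * s i * u⁻¹, x + 1 + y) := by
    have hsplit : phi cs (u * s i * u⁻¹) = phi cs u * phi cs (s i) * phi cs u⁻¹ := by
      rw [← map_mul, ← map_mul]
    rw [hsplit, Equiv.Perm.mul_apply, Equiv.Perm.mul_apply, hx, phi_simple, sigma_apply]
    rw [if_pos rfl]
    have : s i * s i * s i = s i := by rw [cs.simple_mul_simple_self]; simp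
    rw [this, hy (x + 1)]
  rw [hcomp]
  show x + 1 + y = 1
  calc x + 1 + y = (x + y) + 1 := by ring
    _ = 1 := by rw [hxy, zero_add]

theorem nu_refl_mul {t : W} (ht : cs.IsReflection t) (w : W) :
    nu cs (t * w) t = nu cs w t + 1 := by
  have h1 : (t * w)⁻¹ = w⁻¹ * t := by rw [mul_inv_rev, ht.inv]
  have h2 : phi cs t (t, 0) = (t, 1) := by
    have := phi_apply cs t t 0
    rw [refl_phi_self cs ht] at this
    rw [this, zero_add]
    congr 1
    group
  rw [nu, h1, map_mul, Equiv.Perm.mul_apply, h2, phi_apply]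
  show _ + _ = _ + 1
  rw [add_comm]
  rfl

/-- A reflection that shortens `w` from the left has odd parity. -/
theorem nu_eq_one_of_isLeftInversion {t w : W} (ht : cs.IsReflection t)
    (hlen : ℓ (t * w) < ℓ w) : nu cs w t = 1 := by
  classical
  rcases (show ∀ x : ZMod 2, x = 0 ∨ x = 1 by decide) (nu cs w t) with h0 | h1
  · exfalso
    have h2 : nu cs (t * w) t = 1 := by rw [nu_refl_mul cs ht, h0, zero_add]
    obtain ⟨ω, hred, hw⟩ := cs.exists_reduced_word' (t * w)
    rw [hw, nu_eq_count] at h2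
    have hmem : t ∈ cs.leftInvSeq ω := by
      by_contra hnm
      rw [List.count_eq_zero_of_not_mem hnm] at h2
      simp at h2
    have hinv := cs.isLeftInversion_of_mem_leftInvSeq hred hmem
    rw [← hw] at hinv
    have : ℓ (t * (t * w)) < ℓ (t * w) := hinv.2
    rw [← mul_assoc, ht.mul_self, one_mul] at this
    omega
  · exact h1

/-- The strong exchange property (for reflections, on reduced words). -/
theorem strong_exchange {ω : List B} (hred : cs.IsReduced ω) {t : W} (ht : cs.IsReflection t)
    (hlen : ℓ (t * π ω) < ℓ (π ω)) :
    ∃ j < ω.length, t * π ω = π (ω.eraseIdx j) := by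
  classical
  have h1 : nu cs (π ω) t = 1 := nu_eq_one_of_isLeftInversion cs ht hlen
  rw [nu_eq_count] at h1
  have hmem : t ∈ cs.leftInvSeq ω := by
    by_contra hnm
    rw [List.count_eq_zero_of_not_mem hnm] at h1
    simp at h1
  obtain ⟨j, hj, hget⟩ := List.getElem_of_mem hmem
  rw [cs.length_leftInvSeq] at hj
  refine ⟨j, hj, ?_⟩
  have := cs.getD_leftInvSeq_mul_wordProd ω j
  rw [List.getD_eq_getElem _ _ (by rw [cs.length_leftInvSeq]; exact hj), hget] at this
  exact this

theorem wordProd_mem_closure {I : Set B} {ω : List B} (h : ∀ b ∈ ω, b ∈ I) :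
    π ω ∈ Subgroup.closure (cs.simple '' I) := by
  induction ω with
  | nil => rw [cs.wordProd_nil]; exact one_mem _
  | cons i ω ih =>
    rw [cs.wordProd_cons]
    exact mul_mem (Subgroup.subset_closure ⟨i, h i (List.mem_cons_self), rfl⟩)
      (ih fun b hb => h b (List.mem_cons_of_mem i hb))

theorem exists_word_of_mem_closure {I : Set B} {u : W}
    (hu : u ∈ Subgroup.closure (cs.simple '' I)) :
    ∃ ω : List B, (∀ b ∈ ω, b ∈ I) ∧ u = π ω := by
  induction hu using Subgroup.closure_induction with
  | mem x hx =>
    obtain ⟨i, hi, rfl⟩ := hx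
    exact ⟨[i], by simpa using hi, by simp [cs.wordProd_cons]⟩
  | one => exact ⟨[], by simp, by simp⟩
  | mul x y hx hy ihx ihy =>
    obtain ⟨ω₁, h1, rfl⟩ := ihx
    obtain ⟨ω₂, h2, rfl⟩ := ihy
    exact ⟨ω₁ ++ ω₂, fun b hb => (List.mem_append.mp hb).elim (h1 b) (h2 b),
      (cs.wordProd_append ω₁ ω₂).symm⟩
  | inv x hx ihx =>
    obtain ⟨ω, h1, rfl⟩ := ihx
    exact ⟨ω.reverse, fun b hb => h1 b (List.mem_reverse.mp hb),
      (cs.wordProd_reverse ω).symm⟩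

/-- Every word can be replaced by a reduced word using only its letters. -/
theorem exists_reduced_word_subset (ω : List B) :
    ∃ ω' : List B, cs.IsReduced ω' ∧ π ω' = π ω ∧ ∀ b ∈ ω', b ∈ ω := by
  induction ω with
  | nil => exact ⟨[], by simp [CoxeterSystem.IsReduced], rfl, by simp⟩
  | cons i ρ ih =>
    obtain ⟨ρ', hred, hprod, hsub⟩ := ih
    rcases cs.length_simple_mul (π ρ') i with h | h
    · -- lengthens
      refine ⟨i :: ρ', ?_, ?_, ?_⟩
      · show ℓ (π (i :: ρ')) = (i :: ρ').length
        rw [CoxeterSystem.IsReduced] at hred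
        rw [cs.wordProd_cons, hprod, List.length_cons, ← hprod, h, hred]
      · rw [cs.wordProd_cons, cs.wordProd_cons, hprod]
      · intro b hb
        rcases List.mem_cons.mp hb with rfl | hb
        · exact List.mem_cons_self
        · exact List.mem_cons_of_mem _ (hsub b hb)
    · -- shortens: use exchange
      have hlt : ℓ (s i * π ρ') < ℓ (π ρ') := by omega
      obtain ⟨j, hj, hex⟩ := strong_exchange cs hred (cs.isReflection_simple i) hlt
      refine ⟨ρ'.eraseIdx j, ?_, ?_, ?_⟩
      · show ℓ (π (ρ'.eraseIdx j)) = (ρ'.eraseIdx j).length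
        have hlen1 : (ρ'.eraseIdx j).length + 1 = ρ'.length := List.length_eraseIdx_add_one hj
        have hle := cs.length_wordProd_le (ρ'.eraseIdx j)
        have : ℓ (π (ρ'.eraseIdx j)) = ℓ (π ρ') - 1 := by
          rw [← hex]
          omega
        rw [CoxeterSystem.IsReduced] at hred
        omega
      · rw [← hex, cs.wordProd_cons, hprod]
      · intro b hb
        exact List.mem_cons_of_mem _ (hsub b (List.mem_of_mem_eraseIdx hb))

theorem exists_reduced_word_mem {I : Set B} {u : W}
    (hu : u ∈ Subgroup.closure (cs.simple '' I)) :
    ∃ ω : List B, cs.IsReduced ω ∧ (∀ b ∈ ω, b ∈ I) ∧ u = π ω := by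
  obtain ⟨ω, hI, rfl⟩ := exists_word_of_mem_closure cs hu
  obtain ⟨ω', hred, hprod, hsub⟩ := exists_reduced_word_subset cs ω
  exact ⟨ω', hred, fun b hb => hI b (hsub b hb), hprod.symm⟩

section MinLength

variable {I J : Set B} {d : W}

/-- If `d` is minimal in its double coset, multiplication by `⟨I⟩` on the left adds lengths. -/
theorem length_mul_left_of_min
    (hmin : ∀ u ∈ Subgroup.closure (cs.simple '' I), ∀ v ∈ Subgroup.closure (cs.simple '' J),
      ℓ d ≤ ℓ (u * d * v)) :
    ∀ u ∈ Subgroup.closure (cs.simple '' I), ℓ (u * d) = ℓ u + ℓ d := by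
  suffices H : ∀ n u, ℓ u = n → u ∈ Subgroup.closure (cs.simple '' I) →
      ℓ (u * d) = ℓ u + ℓ d by
    intro u hu; exact H (ℓ u) u rfl hu
  intro n
  induction n using Nat.strong_induction_on with
  | _ n ih =>
  intro u hlen hu
  rcases eq_or_ne u 1 with rfl | hne
  · simp
  obtain ⟨ω, hred, hI, rfl⟩ := exists_reduced_word_mem cs hu
  cases ω with
  | nil => exact absurd (cs.wordProd_nil) hne
  | cons i ρ =>
    have hredρ : cs.IsReduced ρ := by simpa using hred.drop 1
    have hu' : π ρ ∈ Subgroup.closure (cs.simple '' I) :=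
      wordProd_mem_closure cs (fun b hb => hI b (List.mem_cons_of_mem _ hb))
    have hiI : s i ∈ cs.simple '' I := ⟨i, hI i (List.mem_cons_self), rfl⟩
    have hlu : ℓ (π (i :: ρ)) = ρ.length + 1 := by
      rw [CoxeterSystem.IsReduced] at hred
      rw [hred, List.length_cons]
    have hlu' : ℓ (π ρ) = ρ.length := hredρ
    have IH : ℓ (π ρ * d) = ℓ (π ρ) + ℓ d := by
      refine ih ρ.length ?_ (π ρ) hlu' hu'
      omega
    have hsplit : π (i :: ρ) * d = s i * (π ρ * d) := by
      rw [cs.wordProd_cons, mul_assoc]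
    rcases cs.length_simple_mul (π ρ * d) i with hup | hdown
    · rw [hsplit, hup, IH, hlu, hlu']
      omega
    · exfalso
      obtain ⟨δ, hδred, hδ⟩ := cs.exists_reduced_word' d
      have hδlen : δ.length = ℓ d := by
        rw [CoxeterSystem.IsReduced] at hδred
        rw [← hδred, ← hδ]
      have happ : cs.IsReduced (ρ ++ δ) := by
        show ℓ (π (ρ ++ δ)) = _
        rw [cs.wordProd_append, ← hδ, IH, List.length_append, hlu', hδlen]
      have hlt : ℓ (s i * π (ρ ++ δ)) < ℓ (π (ρ ++ δ)) := by
        rw [cs.wordProd_append, ← hδ]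
        omega
      obtain ⟨j, hj, hex⟩ := strong_exchange cs happ (cs.isReflection_simple i) hlt
      rw [cs.wordProd_append, ← hδ] at hex
      by_cases hcase : j < ρ.length
      · rw [List.eraseIdx_append_of_lt_length hcase] at hex
        have hu_eq : π (i :: ρ) = π (ρ.eraseIdx j) := by
          have h2 : π (i :: ρ) * d = π (ρ.eraseIdx j) * d := by
            rw [hsplit, hex, cs.wordProd_append, ← hδ]
          exact mul_right_cancel h2
        have hshort : ℓ (π (i :: ρ)) ≤ (ρ.eraseIdx j).length := by
          rw [hu_eq]; exact cs.length_wordProd_le _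
        have := List.length_eraseIdx_add_one hcase
        omega
      · push_neg at hcase
        rw [List.eraseIdx_append_of_length_le hcase] at hex
        set m := j - ρ.length with hm
        have hmlt : m < δ.length := by
          rw [List.length_append] at hj
          omega
        have hd'' : π (δ.eraseIdx m) = (((π ρ)⁻¹ * s i * π ρ) * d) * 1 := by
          have h4 : π ρ * π (δ.eraseIdx m) = s i * (π ρ * d) := by
            rw [hex, cs.wordProd_append]
          rw [mul_one]
          have h5 := congrArg (fun x => (π ρ)⁻¹ * x) h4
          simpa [mul_assoc] using h5
        have hmem : (π ρ)⁻¹ * s i * π ρ ∈ Subgroup.closure (cs.simple '' I) :=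
          mul_mem (mul_mem (inv_mem hu') (Subgroup.subset_closure hiI)) hu'
        have hge : ℓ d ≤ ℓ (π (δ.eraseIdx m)) := by
          rw [hd'']
          exact hmin _ hmem 1 (one_mem _)
        have hle : ℓ (π (δ.eraseIdx m)) ≤ (δ.eraseIdx m).length := cs.length_wordProd_le _
        have := List.length_eraseIdx_add_one hmlt
        omega

/-- Right-handed version. -/
theorem length_mul_right_of_min
    (hmin : ∀ u ∈ Subgroup.closure (cs.simple '' I), ∀ v ∈ Subgroup.closure (cs.simple '' J),
      ℓ d ≤ ℓ (u * d * v)) :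
    ∀ v ∈ Subgroup.closure (cs.simple '' J), ℓ (d * v) = ℓ d + ℓ v := by
  have hmin' : ∀ u ∈ Subgroup.closure (cs.simple '' J), ∀ v ∈ Subgroup.closure (cs.simple '' I),
      ℓ d⁻¹ ≤ ℓ (u * d⁻¹ * v) := by
    intro u hu v hv
    have h1 : ℓ (u * d⁻¹ * v) = ℓ (v⁻¹ * d * u⁻¹) := by
      rw [← cs.length_inv (v⁻¹ * d * u⁻¹)]
      congr 1
      group
    rw [cs.length_inv, h1]
    exact hmin v⁻¹ (inv_mem hv) u⁻¹ (inv_mem hu)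
  intro v hv
  have h2 := length_mul_left_of_min cs hmin' v⁻¹ (inv_mem hv)
  have h3 : ℓ (v⁻¹ * d⁻¹) = ℓ (d * v) := by
    rw [← cs.length_inv (d * v)]
    congr 1
    group
  rw [h3, cs.length_inv, cs.length_inv] at h2
  omega

theorem eq_simple_of_mem_closure_of_length_one {t : W}
    (ht : t ∈ Subgroup.closure (cs.simple '' J)) (hlen : ℓ t = 1) :
    ∃ j ∈ J, t = s j := by
  obtain ⟨ω, hred, hJ, rfl⟩ := exists_reduced_word_mem cs ht
  rw [CoxeterSystem.IsReduced] at hred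
  rw [hred] at hlen
  match ω, hlen with
  | [j], _ =>
    refine ⟨j, hJ j (List.mem_cons_self), ?_⟩
    simp [cs.wordProd_cons]

end MinLength

theorem mem_closure_inter
    (hmin : ∀ u ∈ Subgroup.closure (cs.simple '' I), ∀ v ∈ Subgroup.closure (cs.simple '' J),
      ℓ d ≤ ℓ (u * d * v)) :
    ∀ n u, ℓ u = n → u ∈ Subgroup.closure (cs.simple '' I) →
      ∀ v ∈ Subgroup.closure (cs.simple '' J), u = d * v * d⁻¹ →
      u ∈ Subgroup.closure ((cs.simple '' I) ∩ ((fun x => d * x * d⁻¹) '' (cs.simple '' J))) := by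
  intro n
  induction n using Nat.strong_induction_on with
  | _ n ih =>
  intro u hlen huI v hvJ huv
  rcases eq_or_ne u 1 with rfl | hne
  · exact one_mem _
  obtain ⟨ω, hred, hI, rfl⟩ := exists_reduced_word_mem cs huI
  cases ω with
  | nil => exact absurd (cs.wordProd_nil) hne
  | cons i ρ =>
    have hredρ : cs.IsReduced ρ := by simpa using hred.drop 1
    have hu' : π ρ ∈ Subgroup.closure (cs.simple '' I) :=
      wordProd_mem_closure cs (fun b hb => hI b (List.mem_cons_of_mem _ hb))
    have hiI : s i ∈ cs.simple '' I := ⟨i, hI i (List.mem_cons_self), rfl⟩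
    have hlu : ℓ (π (i :: ρ)) = ρ.length + 1 := by
      rw [CoxeterSystem.IsReduced] at hred
      rw [hred, List.length_cons]
    have hlu' : ℓ (π ρ) = ρ.length := hredρ
    have hsiu : s i * π (i :: ρ) = π ρ := by
      rw [cs.wordProd_cons, ← mul_assoc, cs.simple_mul_simple_self, one_mul]
    have hud : π (i :: ρ) * d = d * v := by rw [huv]; group
    have hL := length_mul_left_of_min cs hmin
    have hR := length_mul_right_of_min cs hmin
    obtain ⟨δ, hδred, hδ⟩ := cs.exists_reduced_word' d
    have hδlen : δ.length = ℓ d := by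
      rw [CoxeterSystem.IsReduced] at hδred
      rw [← hδred, ← hδ]
    obtain ⟨ωv, hvred, hvlet, hveq⟩ := exists_reduced_word_mem cs hvJ
    have hvlen : ωv.length = ℓ v := by
      rw [CoxeterSystem.IsReduced] at hvred
      rw [← hvred, ← hveq]
    have happ : cs.IsReduced (δ ++ ωv) := by
      show ℓ (π (δ ++ ωv)) = _
      rw [cs.wordProd_append, ← hδ, ← hveq, hR v hvJ, List.length_append, hδlen, hvlen]
    have hdv : π (δ ++ ωv) = d * v := by rw [cs.wordProd_append, ← hδ, ← hveq]
    have key1 : s i * (d * v) = π ρ * d := by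
      rw [← hud, ← mul_assoc, hsiu]
    have hlt : ℓ (s i * π (δ ++ ωv)) < ℓ (π (δ ++ ωv)) := by
      rw [hdv, key1, hL (π ρ) hu', hR v hvJ]
      have e1 : ℓ d + ℓ v = ℓ (π (i :: ρ)) + ℓ d := by
        rw [← hR v hvJ, ← hud, hL (π (i :: ρ)) huI]
      omega
    obtain ⟨j, hj, hex⟩ := strong_exchange cs happ (cs.isReflection_simple i) hlt
    rw [hdv] at hex
    by_cases hcase : j < δ.length
    · exfalso
      rw [List.eraseIdx_append_of_lt_length hcase] at hex
      have h2 : (s i * d) * v = π (δ.eraseIdx j) * v := by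
        rw [mul_assoc, hex, cs.wordProd_append, ← hveq]
      have h3 : s i * d = π (δ.eraseIdx j) := mul_right_cancel h2
      have h4 : ℓ (s i * d) ≤ (δ.eraseIdx j).length := by
        rw [h3]; exact cs.length_wordProd_le _
      have h5 : ℓ d ≤ ℓ (s i * d) := by
        have := hmin (s i) (Subgroup.subset_closure hiI) 1 (one_mem _)
        rwa [mul_one] at this
      have := List.length_eraseIdx_add_one hcase
      omega
    · push_neg at hcase
      rw [List.eraseIdx_append_of_length_le hcase] at hex
      set m := j - δ.length with hm
      have hmlt : m < ωv.length := by
        rw [List.length_append] at hj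
        omega
      have hv''J : π (ωv.eraseIdx m) ∈ Subgroup.closure (cs.simple '' J) :=
        wordProd_mem_closure cs (fun b hb => hvlet b (List.mem_of_mem_eraseIdx hb))
      have hex2 : s i * (d * v) = d * π (ωv.eraseIdx m) := by
        rw [hex, cs.wordProd_append, ← hδ]
      have htv : d⁻¹ * s i * d = π (ωv.eraseIdx m) * v⁻¹ := by
        have := congrArg (fun x => d⁻¹ * x * v⁻¹) hex2
        simpa [mul_assoc] using this
      have htJ : d⁻¹ * s i * d ∈ Subgroup.closure (cs.simple '' J) := by
        rw [htv]
        exact mul_mem hv''J (inv_mem hvJ)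
      have h5 : ℓ d ≤ ℓ (s i * d) := by
        have := hmin (s i) (Subgroup.subset_closure hiI) 1 (one_mem _)
        rwa [mul_one] at this
      have hsd : ℓ (s i * d) = ℓ d + 1 := by
        rcases cs.length_simple_mul d i with h | h
        · exact h
        · omega
      have hdt : d * (d⁻¹ * s i * d) = s i * d := by group
      have hlt1 : ℓ (d⁻¹ * s i * d) = 1 := by
        have := hR (d⁻¹ * s i * d) htJ
        rw [hdt, hsd] at this
        omega
      obtain ⟨b, hbJ, htb⟩ := eq_simple_of_mem_closure_of_length_one cs htJ hlt1
      have hsiK : s i ∈ (cs.simple '' I) ∩ ((fun x => d * x * d⁻¹) '' (cs.simple '' J)) := by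
        refine ⟨hiI, s b, ⟨b, hbJ, rfl⟩, ?_⟩
        show d * s b * d⁻¹ = s i
        rw [← htb]
        group
      have hu'dec : π ρ = d * ((d⁻¹ * s i * d) * v) * d⁻¹ := by
        rw [← hsiu, huv]
        group
      have htvJ : (d⁻¹ * s i * d) * v ∈ Subgroup.closure (cs.simple '' J) := mul_mem htJ hvJ
      have hmemu' := ih ρ.length (by omega) (π ρ) hlu' hu' _ htvJ hu'dec
      have hfin : π (i :: ρ) = s i * π ρ := cs.wordProd_cons i ρ
      rw [hfin]
      exact mul_mem (Subgroup.subset_closure hsiK) hmemu'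

end KilmoyerAux

/-- Kilmoyer's theorem: if `d` has minimal length in the double coset
`⟨I⟩w⟨J⟩` of a Coxeter system, then `⟨I⟩ ∩ d⟨J⟩d⁻¹ = ⟨K⟩` where
`K = I ∩ dJd⁻¹`. -/
theorem kilmoyer_double_coset {B : Type*} {W : Type*} [Group W]
    (M : CoxeterMatrix B) (cs : CoxeterSystem M W) (I J : Set B) (w d : W)
    (hd : ∃ i ∈ Subgroup.closure (cs.simple '' I),
      ∃ j ∈ Subgroup.closure (cs.simple '' J), d = i * w * j)
    (hmin : ∀ x : W, (∃ i ∈ Subgroup.closure (cs.simple '' I),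
      ∃ j ∈ Subgroup.closure (cs.simple '' J), x = i * w * j) →
        cs.length d ≤ cs.length x) :
    Subgroup.closure (cs.simple '' I) ⊓
      Subgroup.map (MulAut.conj d).toMonoidHom (Subgroup.closure (cs.simple '' J)) =
    Subgroup.closure ((cs.simple '' I) ∩ ((fun x => d * x * d⁻¹) '' (cs.simple '' J))) := by
  obtain ⟨a, ha, b, hb, hdeq⟩ := hd
  have hmin' : ∀ u ∈ Subgroup.closure (cs.simple '' I),
      ∀ v ∈ Subgroup.closure (cs.simple '' J), cs.length d ≤ cs.length (u * d * v) := by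
    intro u hu v hv
    exact hmin (u * d * v) ⟨u * a, mul_mem hu ha, b * v, mul_mem hb hv, by rw [hdeq]; group⟩
  apply le_antisymm
  · intro u hu
    rw [Subgroup.mem_inf] at hu
    obtain ⟨huI, huM⟩ := hu
    obtain ⟨v, hv, hvu⟩ := Subgroup.mem_map.mp huM
    refine KilmoyerAux.mem_closure_inter cs hmin' (cs.length u) u rfl huI v hv ?_
    rw [← hvu]
    rfl
  · rw [Subgroup.closure_le]
    rintro x ⟨hxI, y, hyJ, rfl⟩
    rw [SetLike.mem_coe, Subgroup.mem_inf]
    refine ⟨Subgroup.subset_closure hxI, ?_⟩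
    exact Subgroup.mem_map.mpr ⟨y, Subgroup.subset_closure hyJ, rfl⟩
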